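/- Let A be a commutative ring, k ≥ 1, and let f_1, …, f_k ∈ A[T^{±1}] be Laurent polynomials, with f_i = Σ_{j∈ℤ} c_{i,j} T^j (finitely many c_{i,j} nonzero). Suppose that for every tuple of integers (a_1, …, a_k) one has f_1(T^{a_1})·f_2(T^{a_2})⋯f_k(T^{a_k}) = 0 in A[T^{±1}], where f_i(T^{a_i}) denotes the image of f_i under the ring endomorphism sending T to T^{a_i}. Then c_{1,j_1}·c_{2,j_2}⋯c_{k,j_k} = 0 for every tuple (j_1, …, j_k) ∈ ℤ^k. -/

import Mathlib

open LaurentPolynomial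

private lemma coeff_mul_mapDomain {A : Type*} [CommRing A] (φ : ℤ →+ ℤ)
    (f g : AddMonoidAlgebra A ℤ) (x : ℤ) :
    (AddMonoidAlgebra.mapDomainRingHom A φ f * g).coeff x
      = f.coeff.sum fun p b => g.coeff.sum fun q c => if φ p + q = x then b * c else 0 := by
  classical
  have h1 : (AddMonoidAlgebra.mapDomainRingHom A φ f).coeff = Finsupp.mapDomain φ f.coeff := rfl
  rw [AddMonoidAlgebra.coeff_mul, h1]
  refine Finsupp.sum_mapDomain_index ?_ ?_
  · intro p; simp [Finsupp.sum]
  · intro p b₁ b₂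
    simp only [Finsupp.sum]
    rw [← Finset.sum_add_distrib]
    refine Finset.sum_congr rfl fun q _ => ?_
    split_ifs <;> ring

private lemma key_lemma {A : Type*} [CommRing A] (f g : LaurentPolynomial A)
    (h : ∀ a : ℤ,
      AddMonoidAlgebra.mapDomainRingHom A (AddMonoidHom.mulLeft a) f * g = 0)
    (j m : ℤ) : f.coeff j * g.coeff m = 0 := by
  classical
  by_cases hj : j ∈ f.coeff.support
  · by_cases hm : m ∈ g.coeff.support
    · set B : ℕ := g.coeff.support.sup fun q => (m - q).natAbs with hB
      set a : ℤ := (B : ℤ) + 1 with ha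
      have hBq : ∀ q ∈ g.coeff.support, |m - q| ≤ (B : ℤ) := by
        intro q hq
        rw [Int.abs_eq_natAbs]
        exact_mod_cast Finset.le_sup (f := fun q => (m - q).natAbs) hq
      have hkey : ∀ j' ∈ f.coeff.support, ∀ q ∈ g.coeff.support,
          a * j' + q = a * j + m → j' = j ∧ q = m := by
        intro j' _ q hq heq
        by_cases hjj : j' = j
        · subst hjj
          exact ⟨rfl, by linarith [heq]⟩
        · exfalso
          have h1 : a * (j' - j) = m - q := by linear_combination heq
          have h2 : |a * (j' - j)| ≤ (B : ℤ) := h1 ▸ hBq q hq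
          have h3 : (1 : ℤ) ≤ |j' - j| := by
            have := abs_pos.mpr (sub_ne_zero.mpr hjj)
            omega
          have ha0 : (0 : ℤ) < a := by rw [ha]; positivity
          have h4 : a ≤ |a * (j' - j)| := by
            rw [abs_mul, abs_of_pos ha0]
            calc a = a * 1 := (mul_one a).symm
              _ ≤ a * |j' - j| := mul_le_mul_of_nonneg_left h3 (le_of_lt ha0)
          linarith
      have h0 : (AddMonoidAlgebra.mapDomainRingHom A (AddMonoidHom.mulLeft a) f * g).coeff
          (a * j + m) = 0 := by rw [h a]; rfl
      have hmul := coeff_mul_mapDomain (AddMonoidHom.mulLeft a) f g (a * j + m)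
      have hsum : (f.coeff.sum fun j' b => g.coeff.sum fun q c =>
          if (AddMonoidHom.mulLeft a) j' + q = a * j + m then b * c else 0) = f.coeff j * g.coeff m := by
        rw [Finsupp.sum, Finset.sum_eq_single_of_mem j hj]
        · rw [Finsupp.sum, Finset.sum_eq_single_of_mem m hm]
          · simp
          · intro q hq hqm
            exact if_neg fun hc => hqm (hkey j hj q hq hc).2
        · intro j' hj' hne
          rw [Finsupp.sum]
          exact Finset.sum_eq_zero fun q hq =>
            if_neg fun hc => hne (hkey j' hj' q hq hc).1
      rw [hmul, hsum] at h0
      exact h0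
    · rw [Finsupp.notMem_support_iff.mp hm, mul_zero]
  · rw [Finsupp.notMem_support_iff.mp hj, zero_mul]

private lemma aux_lemma {A : Type*} [CommRing A] : ∀ (k : ℕ)
    (f : Fin (k + 1) → LaurentPolynomial A),
    (∀ a : Fin (k + 1) → ℤ,
      (∏ i, AddMonoidAlgebra.mapDomainRingHom A (AddMonoidHom.mulLeft (a i)) (f i)) = 0) →
    ∀ j : Fin (k + 1) → ℤ, (∏ i, (f i).coeff (j i)) = 0 := by
  intro k
  induction k with
  | zero =>
    intro f hprod j
    rw [Fin.prod_univ_one]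
    have h1 : ∀ a : ℤ,
        AddMonoidAlgebra.mapDomainRingHom A (AddMonoidHom.mulLeft a) (f 0) * 1 = 0 := by
      intro a
      rw [mul_one]
      simpa [Fin.prod_univ_one] using hprod fun _ => a
    have h2 := key_lemma (f 0) 1 h1 (j 0) 0
    rwa [AddMonoidAlgebra.coeff_one_zero, mul_one] at h2
  | succ k ih =>
    intro f hprod j
    classical
    have hkey : ∀ a' : Fin (k + 1) → ℤ,
        (f 0).coeff (j 0) • (∏ i : Fin (k + 1),
          AddMonoidAlgebra.mapDomainRingHom A (AddMonoidHom.mulLeft (a' i)) (f i.succ)) = 0 := by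
      intro a'
      have h1 : ∀ a : ℤ,
          AddMonoidAlgebra.mapDomainRingHom A (AddMonoidHom.mulLeft a) (f 0) *
            (∏ i : Fin (k + 1),
              AddMonoidAlgebra.mapDomainRingHom A (AddMonoidHom.mulLeft (a' i)) (f i.succ))
              = 0 := by
        intro a
        simpa only [Fin.prod_univ_succ, Fin.cons_zero, Fin.cons_succ]
          using hprod (Fin.cons a a')
      ext n
      have h2 := key_lemma (f 0) _ h1 (j 0) n
      rw [AddMonoidAlgebra.coeff_smul_apply, smul_eq_mul]
      simpa using h2
    have h2 := ih (fun i => (if i = 0 then (f 0).coeff (j 0) else 1) • f i.succ) ?_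
      (fun i => j i.succ)
    · have hco : ∀ i : Fin (k + 1),
          ((if i = 0 then (f 0).coeff (j 0) else 1) • f i.succ).coeff (j i.succ)
            = (if i = 0 then (f 0).coeff (j 0) else 1) * (f i.succ).coeff (j i.succ) := fun i => by
        rw [AddMonoidAlgebra.coeff_smul_apply, smul_eq_mul]
      rw [Finset.prod_congr rfl fun i _ => hco i, Finset.prod_mul_distrib,
        Finset.prod_ite_eq' Finset.univ (0 : Fin (k + 1))
          (fun _ => (f 0).coeff (j 0))] at h2
      simp only [Finset.mem_univ, if_true] at h2
      rw [Fin.prod_univ_succ]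
      exact h2
    · intro a'
      have hmap : ∀ i : Fin (k + 1),
          AddMonoidAlgebra.mapDomainRingHom A (AddMonoidHom.mulLeft (a' i))
            ((if i = 0 then (f 0).coeff (j 0) else 1) • f i.succ)
          = algebraMap A (LaurentPolynomial A) (if i = 0 then (f 0).coeff (j 0) else 1) *
            AddMonoidAlgebra.mapDomainRingHom A (AddMonoidHom.mulLeft (a' i)) (f i.succ) := by
        intro i
        rw [← Algebra.smul_def]
        simp only [AddMonoidAlgebra.mapDomainRingHom_apply]
        exact AddMonoidAlgebra.mapDomain_vadd _ _ _
      rw [Finset.prod_congr rfl fun i _ => hmap i, Finset.prod_mul_distrib, ← map_prod,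
        Finset.prod_ite_eq' Finset.univ (0 : Fin (k + 1)) (fun _ => (f 0).coeff (j 0))]
      simp only [Finset.mem_univ, if_true]
      rw [← Algebra.smul_def]
      exact hkey a'

/-- Let `A` be a commutative ring, `k ≥ 1`, and `f_1, …, f_k ∈ A[T^{±1}]` Laurent
polynomials with coefficients `c_{i,j}`.  If for every tuple of integers `(a_1, …, a_k)`
one has `f_1(T^{a_1}) ⋯ f_k(T^{a_k}) = 0`, then `c_{1,j_1} ⋯ c_{k,j_k} = 0` for every
tuple `(j_1, …, j_k)`. -/
theorem stmt_15 (A : Type*) [CommRing A] (k : ℕ) (hk : 1 ≤ k)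
    (f : Fin k → LaurentPolynomial A)
    (hprod : ∀ a : Fin k → ℤ,
      (∏ i : Fin k,
        AddMonoidAlgebra.mapDomainRingHom A (AddMonoidHom.mulLeft (a i)) (f i)) = 0) :
    ∀ j : Fin k → ℤ, (∏ i : Fin k, (f i).coeff (j i)) = 0 := by
  match k, hk with
  | k + 1, _ => exact aux_lemma k f hprod
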